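/- arXiv:1601.05123 — 2 statements merged into one kernel-verified Lean document; each statement's English description precedes it below -/
import Mathlib

section
/- For every ε > 0 there exists a constant C > 0 such that for every prime p and all integers M, N with 1 ≤ M, N < p, one has ∑ 1/‖x‖_p ≤ C (1/N + M/p) p^ε, where the sum is over all integers x with 1 ≤ x ≤ p-1, ‖x‖_p > p/M and ‖x̄‖_p ≤ p/N. -/
/-- the multiplicative inverse of `x` modulo `p`, as a natural number -/
def pinv (p x : ℕ) : ℕ := ((x : ZMod p)⁻¹).val

/-- `‖u‖_p`: the distance from `u` to the nearest multiple of `p` -/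
def dp (p : ℕ) (u : ℤ) : ℕ := min (u % p).toNat (p - (u % p).toNat)

open Finset Real

lemma sum_le_image_sum {α β : Type*} [DecidableEq β] (s : Finset α) (f : α → β)
    (g : α → ℝ) (h : β → ℝ) (hg : ∀ a ∈ s, 0 ≤ g a) (hgh : ∀ a ∈ s, g a ≤ h (f a)) :
    ∑ a ∈ s, g a ≤ ∑ b ∈ s.image f, ((s.filter (fun a => f a = b)).card : ℝ) * h b := by
  rw [← Finset.sum_fiberwise_of_maps_to (fun a ha => Finset.mem_image_of_mem f ha) g]
  refine Finset.sum_le_sum fun b hb => ?_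
  have : ((s.filter (fun a => f a = b)).card : ℝ) * h b
      = ∑ _a ∈ s.filter (fun a => f a = b), h b := by
    rw [Finset.sum_const, nsmul_eq_mul]
  rw [this]
  refine Finset.sum_le_sum fun a ha => ?_
  obtain ⟨has, hfa⟩ := Finset.mem_filter.mp ha
  calc g a ≤ h (f a) := hgh a has
    _ = h b := by rw [hfa]

lemma dp_nat (p x : ℕ) (hx : x < p) : dp p x = min x (p - x) := by
  unfold dp
  have h1 : ((x:ℤ) % (p:ℤ)) = ((x % p : ℕ) : ℤ) := by push_cast; ring
  rw [h1, Int.toNat_natCast, Nat.mod_eq_of_lt hx]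

lemma dp_mem {p x : ℕ} (hp : 2 ≤ p) (hx1 : 1 ≤ x) (hx2 : x ≤ p - 1) :
    1 ≤ dp p x ∧ dp p x ≤ p := by
  rw [dp_nat p x (by omega)]; omega

lemma dp_cast {p x : ℕ} (hx : x < p) :
    ((dp p x : ℕ) : ZMod p) = (x : ZMod p) ∨ ((dp p x : ℕ) : ZMod p) = -(x : ZMod p) := by
  rw [dp_nat p x hx]
  rcases min_cases x (p - x) with ⟨h, _⟩ | ⟨h, _⟩
  · left; rw [h]
  · right; rw [h, Nat.cast_sub (le_of_lt hx), ZMod.natCast_self, zero_sub]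

lemma pinv_facts {p x : ℕ} (hp : p.Prime) (hx1 : 1 ≤ x) (hxlt : x < p) :
    1 ≤ pinv p x ∧ pinv p x < p ∧ ((pinv p x : ℕ) : ZMod p) * (x : ZMod p) = 1 := by
  haveI := Fact.mk hp
  have hxne : (x : ZMod p) ≠ 0 := by
    intro h
    rw [ZMod.natCast_eq_zero_iff] at h
    exact absurd (Nat.le_of_dvd (by omega) h) (by omega)
  have hinv : ((pinv p x : ℕ) : ZMod p) = (x : ZMod p)⁻¹ := by
    simp [pinv, ZMod.natCast_val, ZMod.cast_id]
  refine ⟨?_, ZMod.val_lt _, ?_⟩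
  · have h0 : (x : ZMod p)⁻¹ ≠ 0 := inv_ne_zero hxne
    have := (ZMod.val_eq_zero _).not.mpr h0
    simp only [pinv]
    omega
  · rw [hinv, inv_mul_cancel₀ hxne]


lemma divisor_bound {δ : ℝ} (hδ : 0 < δ) : ∃ C : ℝ, 1 ≤ C ∧ ∀ n : ℕ, 1 ≤ n →
    (n.divisors.card : ℝ) ≤ C * (n : ℝ) ^ δ := by
  set K : ℝ := 1 / (δ * Real.log 2) + 1 with hK
  have hlog2 : (0:ℝ) < Real.log 2 := Real.log_pos (by norm_num)
  have hKpos : 1 ≤ K := le_add_of_nonneg_left (by positivity)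
  set Q : ℕ := ⌈(2:ℝ) ^ (1/δ)⌉₊ with hQ
  refine ⟨K ^ Q, one_le_pow₀ hKpos, ?_⟩
  intro n hn
  have hn0 : n ≠ 0 := by omega
  -- key pointwise claim
  have claim1 : ∀ a : ℕ, ((a:ℝ) + 1) ≤ K * (2:ℝ) ^ ((a:ℝ) * δ) := by
    intro a
    have h2 : ((a:ℝ) * δ * Real.log 2) ≤ (2:ℝ) ^ ((a:ℝ) * δ) := by
      rw [Real.rpow_def_of_pos (by norm_num), mul_comm (Real.log 2)]
      linarith [Real.add_one_le_exp ((a:ℝ) * δ * Real.log 2)]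
    have hone : (1:ℝ) ≤ (2:ℝ) ^ ((a:ℝ) * δ) :=
      Real.one_le_rpow (by norm_num) (by positivity)
    have ha : (a:ℝ) ≤ (2:ℝ) ^ ((a:ℝ) * δ) / (δ * Real.log 2) := by
      rw [le_div_iff₀ (by positivity)]
      calc (a:ℝ) * (δ * Real.log 2) = (a:ℝ) * δ * Real.log 2 := by ring
        _ ≤ (2:ℝ) ^ ((a:ℝ) * δ) := h2
    have : K * (2:ℝ) ^ ((a:ℝ) * δ) = (2:ℝ) ^ ((a:ℝ) * δ) / (δ * Real.log 2)
        + (2:ℝ) ^ ((a:ℝ) * δ) := by rw [hK]; ring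
    rw [this]
    exact add_le_add ha hone
  -- setup
  set S := n.primeFactors with hS
  set a : ℕ → ℕ := fun q => n.factorization q with ha
  have hcard : (n.divisors.card : ℝ) = ∏ q ∈ S, ((a q : ℝ) + 1) := by
    rw [Nat.card_divisors hn0]
    push_cast
    rfl
  have hnn : ∏ q ∈ S, q ^ (a q) = n := by
    rw [hS, ← Nat.support_factorization]
    exact Nat.factorization_prod_pow_eq_self hn0
  have hnprod : (n:ℝ) = ∏ q ∈ S, (q:ℝ) ^ (a q) := by
    rw [← hnn]; push_cast; rfl
  have hrpow : (n:ℝ) ^ δ = ∏ q ∈ S, (q:ℝ) ^ ((a q : ℝ) * δ) := by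
    rw [hnprod, ← Real.finset_prod_rpow S _ (fun q _ => by positivity) δ]
    refine Finset.prod_congr rfl fun q hq => ?_
    rw [← Real.rpow_natCast (q:ℝ) (a q), ← Real.rpow_mul (by positivity)]
  set c : ℕ → ℝ := fun q => if q < Q then K else 1 with hc
  have hstep : ∀ q ∈ S, ((a q : ℝ) + 1) ≤ c q * (q:ℝ) ^ ((a q : ℝ) * δ) := by
    intro q hq
    have hqp : q.Prime := Nat.prime_of_mem_primeFactors hq
    have hq2 : (2:ℝ) ≤ (q:ℝ) := by exact_mod_cast hqp.two_le
    by_cases hsm : q < Q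
    · have hcq : c q = K := by simp [hc, hsm]
      rw [hcq]
      refine (claim1 (a q)).trans ?_
      have hmono := Real.rpow_le_rpow (by norm_num) hq2 (by positivity : (0:ℝ) ≤ (a q : ℝ) * δ)
      nlinarith [Real.rpow_nonneg (show (0:ℝ) ≤ 2 by norm_num) ((a q : ℝ) * δ)]
    · have hcq : c q = 1 := by simp [hc, hsm]
      rw [hcq, one_mul]
      have hQq : (2:ℝ) ^ (1/δ) ≤ (q:ℝ) := by
        have h1 : ((Q:ℕ):ℝ) ≤ (q:ℝ) := by exact_mod_cast Nat.le_of_not_lt hsm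
        exact le_trans (Nat.le_ceil _) h1
      have h2q : (2:ℝ) ≤ (q:ℝ) ^ δ := by
        calc (2:ℝ) = ((2:ℝ) ^ (1/δ)) ^ δ := by
              rw [← Real.rpow_mul (by norm_num), one_div,
                inv_mul_cancel₀ (ne_of_gt hδ), Real.rpow_one]
          _ ≤ (q:ℝ) ^ δ := Real.rpow_le_rpow (by positivity) hQq (le_of_lt hδ)
      have hqa : (q:ℝ) ^ ((a q : ℝ) * δ) = ((q:ℝ) ^ δ) ^ (a q) := by
        rw [← Real.rpow_natCast ((q:ℝ)^δ) (a q), ← Real.rpow_mul (by positivity), mul_comm]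
      rw [hqa]
      calc ((a q : ℝ) + 1) ≤ (2:ℝ) ^ (a q) := by
            exact_mod_cast Nat.succ_le_of_lt (Nat.lt_two_pow_self (n := a q))
        _ ≤ ((q:ℝ) ^ δ) ^ (a q) := pow_le_pow_left₀ (by norm_num) h2q _
  have hprodc : ∏ q ∈ S, c q ≤ K ^ Q := by
    rw [← Finset.prod_filter_mul_prod_filter_not S (· < Q)]
    have h1 : ∏ q ∈ S.filter (· < Q), c q = K ^ (S.filter (· < Q)).card := by
      rw [Finset.prod_congr rfl (fun q hq => show c q = K by
        simp [hc, (Finset.mem_filter.mp hq).2]), Finset.prod_const]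
    have h2 : ∏ q ∈ S.filter (¬ · < Q), c q = 1 := by
      refine Finset.prod_eq_one fun q hq => ?_
      simp [hc, (Finset.mem_filter.mp hq).2]
    rw [h1, h2, mul_one]
    refine pow_le_pow_right₀ hKpos (Finset.card_le_card ?_ |>.trans (Finset.card_range Q).le)
    intro q hq
    exact Finset.mem_range.mpr (Finset.mem_filter.mp hq).2
  calc (n.divisors.card : ℝ) = ∏ q ∈ S, ((a q : ℝ) + 1) := hcard
    _ ≤ ∏ q ∈ S, (c q * (q:ℝ) ^ ((a q : ℝ) * δ)) :=
        Finset.prod_le_prod (fun q _ => by positivity) hstep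
    _ = (∏ q ∈ S, c q) * ∏ q ∈ S, (q:ℝ) ^ ((a q : ℝ) * δ) := Finset.prod_mul_distrib
    _ ≤ K ^ Q * (n:ℝ) ^ δ := by
        rw [← hrpow]
        exact mul_le_mul_of_nonneg_right hprodc (by positivity)


set_option maxHeartbeats 2000000 in
theorem sum_inverse_dist_bound_S3 :
    ∀ ε : ℝ, 0 < ε → ∃ C : ℝ, 0 < C ∧
      ∀ p M N : ℕ, p.Prime → 1 ≤ M → M < p → 1 ≤ N → N < p →
        ∑ x ∈ (Finset.Icc 1 (p - 1)).filter
            (fun x : ℕ => (p : ℝ) < M * dp p x ∧ (N * dp p (pinv p x) : ℝ) ≤ p),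
            (1 : ℝ) / (dp p x : ℝ) ≤
          C * (1 / (N : ℝ) + (M : ℝ) / p) * (p : ℝ) ^ ε := by
  intro ε hε
  have hδ : 0 < ε/3 := by linarith
  obtain ⟨C₁, hC₁, hdiv⟩ := divisor_bound hδ
  have h2pow : (0:ℝ) < (2:ℝ) ^ (ε/3) := Real.rpow_pos_of_pos two_pos _
  have h6 : (0:ℝ) < 1 + 6/ε := by positivity
  refine ⟨8 * C₁ * (2:ℝ) ^ (ε/3) * (1 + 6/ε), by positivity, ?_⟩
  intro p M N hp hM1 hMp hN1 hNp
  haveI := Fact.mk hp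
  have hp2 : 2 ≤ p := hp.two_le
  set s := (Finset.Icc 1 (p - 1)).filter
      (fun x : ℕ => (p : ℝ) < M * dp p x ∧ (N * dp p (pinv p x) : ℝ) ≤ p) with hs
  set φ : ℕ → ℕ × ℕ := fun x => (dp p x, dp p (pinv p x)) with hφ
  set t := s.image φ with ht
  -- facts about members of t
  have htfact : ∀ b ∈ t, 2 ≤ b.1 ∧ b.1 ≤ p ∧ 1 ≤ b.2 ∧ N * b.2 ≤ p ∧
      ((b.1 * b.2) % p = 1 ∨ (b.1 * b.2) % p = p - 1) := by
    intro b hb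
    obtain ⟨x, hxs, hfx⟩ := Finset.mem_image.mp hb
    obtain ⟨hxI, hMd, hNd⟩ := Finset.mem_filter.mp hxs
    obtain ⟨hx1, hx2⟩ := Finset.mem_Icc.mp hxI
    have hxlt : x < p := by omega
    obtain ⟨hy1, hylt, hymul⟩ := pinv_facts hp hx1 hxlt
    have hu := dp_mem hp2 hx1 hx2
    have hv := dp_mem hp2 hy1 (by omega : pinv p x ≤ p - 1)
    have hucast := dp_cast hxlt
    have hvcast := dp_cast hylt
    have hb1 : b.1 = dp p x := by rw [← hfx]
    have hb2 : b.2 = dp p (pinv p x) := by rw [← hfx]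
    have hu2 : 2 ≤ dp p x := by
      rcases Nat.lt_or_ge (dp p x) 2 with h | h
      · exfalso
        have he : dp p x = 1 := by omega
        rw [he] at hMd
        have : (p:ℝ) < M := by simpa using hMd
        have : p < M := by exact_mod_cast this
        omega
      · exact h
    have hNv : N * dp p (pinv p x) ≤ p := by exact_mod_cast hNd
    refine ⟨hb1 ▸ hu2, hb1 ▸ hu.2, hb2 ▸ hv.1, hb2 ▸ hNv, ?_⟩
    rw [hb1, hb2]
    set u := dp p x
    set v := dp p (pinv p x)
    have hm2 : 2 ≤ u * v := le_trans (by omega) (Nat.mul_le_mul hu2 hv.1)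
    have hcast : ((u * v : ℕ) : ZMod p) = 1 ∨ ((u * v : ℕ) : ZMod p) = -1 := by
      push_cast
      rcases hucast with h1 | h1 <;> rcases hvcast with h2 | h2 <;> rw [h1, h2]
      · left; rw [mul_comm]; exact hymul
      · right; rw [mul_neg, mul_comm, hymul]
      · right; rw [neg_mul, mul_comm, hymul]
      · left; rw [neg_mul_neg, mul_comm]; exact hymul
    rcases hcast with hc | hc
    · left
      have : u * v ≡ 1 [MOD p] := by
        rw [← ZMod.natCast_eq_natCast_iff]; simpa using hc
      have h1 : u * v % p = 1 % p := this
      rwa [Nat.mod_eq_of_lt (by omega : 1 < p)] at h1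
    · right
      have h1 : ((u * v % p : ℕ) : ZMod p) = ((p - 1 : ℕ) : ZMod p) := by
        rw [ZMod.natCast_mod, hc, Nat.cast_sub (by omega : 1 ≤ p), ZMod.natCast_self,
          zero_sub, Nat.cast_one]
      have h2 := congrArg ZMod.val h1
      rwa [ZMod.val_cast_of_lt (Nat.mod_lt _ (by omega)),
        ZMod.val_cast_of_lt (by omega : p - 1 < p)] at h2
  -- the summation chain
  have ppos : (0:ℝ) < (p:ℝ) := by exact_mod_cast (show 0 < p by omega)
  set D2 : ℝ := 2 * C₁ * (2 * (p:ℝ) * (p:ℝ)) ^ (ε/3) with hD2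
  have hD2pos : 0 < D2 := by
    have : (0:ℝ) < (2 * (p:ℝ) * (p:ℝ)) ^ (ε/3) := Real.rpow_pos_of_pos (by positivity) _
    positivity
  have step1 : ∑ x ∈ s, (1:ℝ) / (dp p x : ℝ) ≤
      ∑ b ∈ t, ((s.filter (fun a => φ a = b)).card : ℝ) * (1 / (b.1 : ℝ)) :=
    sum_le_image_sum s φ _ (fun b => 1 / (b.1 : ℝ)) (fun a _ => by positivity)
      (fun a _ => le_refl _)
  have hcard2 : ∀ b ∈ t, (s.filter (fun a => φ a = b)).card ≤ 2 := by
    intro b hb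
    have hsub : s.filter (fun a => φ a = b) ⊆ {b.1, p - b.1} := by
      intro x hx
      obtain ⟨hxs, hfx⟩ := Finset.mem_filter.mp hx
      obtain ⟨hxI, -, -⟩ := Finset.mem_filter.mp hxs
      obtain ⟨hx1, hx2⟩ := Finset.mem_Icc.mp hxI
      have hb1 : dp p x = b.1 := by rw [← hfx]
      rw [dp_nat p x (by omega)] at hb1
      have hor : x = b.1 ∨ x = p - b.1 := by omega
      simp only [Finset.mem_insert, Finset.mem_singleton]
      exact hor
    calc (s.filter (fun a => φ a = b)).card ≤ ({b.1, p - b.1} : Finset ℕ).card :=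
        Finset.card_le_card hsub
      _ ≤ 2 := (Finset.card_insert_le _ _).trans (by simp)
  have step2 : ∑ b ∈ t, ((s.filter (fun a => φ a = b)).card : ℝ) * (1 / (b.1 : ℝ)) ≤
      2 * ∑ b ∈ t, (1 / (b.1 : ℝ)) := by
    rw [Finset.mul_sum]
    refine Finset.sum_le_sum fun b hb => ?_
    have h1 : (0:ℝ) ≤ 1 / (b.1:ℝ) := by positivity
    have h2 : ((s.filter (fun a => φ a = b)).card : ℝ) ≤ 2 := by
      exact_mod_cast hcard2 b hb
    exact mul_le_mul_of_nonneg_right h2 h1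
  set f2 : ℕ × ℕ → ℕ := fun b => b.1 * b.2 / p with hf2
  have step4 : ∑ b ∈ t, (1 / (b.1 : ℝ)) ≤
      ∑ j ∈ t.image f2, ((t.filter (fun b => f2 b = j)).card : ℝ) *
        (2 / ((N * (j+1) : ℕ) : ℝ)) := by
    refine sum_le_image_sum t f2 _ (fun j => 2 / ((N * (j+1) : ℕ) : ℝ))
      (fun b _ => by positivity) ?_
    intro b hb
    obtain ⟨hu2, hup, hv1, hNv, hmod⟩ := htfact b hb
    have hdm := Nat.div_add_mod (b.1 * b.2) p
    have hm2 : 2 ≤ b.1 * b.2 := le_trans (by omega) (Nat.mul_le_mul hu2 hv1)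
    have hkey : p * (b.1 * b.2 / p + 1) ≤ 2 * (b.1 * b.2) := by
      have hpq : p * (b.1 * b.2 / p + 1) = p * (b.1 * b.2 / p) + p := by ring
      rcases hmod with h | h
      · have hq1 : 1 ≤ b.1 * b.2 / p := by
          by_contra h0
          push_neg at h0
          have h00 : b.1 * b.2 / p = 0 := Nat.lt_one_iff.mp h0
          rw [h00, Nat.mul_zero, Nat.zero_add] at hdm
          omega
        have hple : p ≤ p * (b.1 * b.2 / p) := Nat.le_mul_of_pos_right p hq1
        rw [hpq]; omega
      · rw [hpq]; omega
    have h1 : N * (b.1 * b.2 / p + 1) * p ≤ 2 * b.1 * p := by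
      calc N * (b.1 * b.2 / p + 1) * p = N * (p * (b.1 * b.2 / p + 1)) := by ring
        _ ≤ N * (2 * (b.1 * b.2)) := Nat.mul_le_mul_left _ hkey
        _ = 2 * b.1 * (N * b.2) := by ring
        _ ≤ 2 * b.1 * p := Nat.mul_le_mul_left _ hNv
    have h2 : N * (b.1 * b.2 / p + 1) ≤ 2 * b.1 :=
      Nat.le_of_mul_le_mul_right h1 (by omega)
    have hb1pos : (0:ℝ) < (b.1:ℝ) := by exact_mod_cast (show 0 < b.1 by omega)
    have hNjpos : (0:ℝ) < ((N * (f2 b + 1) : ℕ) : ℝ) := by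
      exact_mod_cast Nat.mul_pos (by omega) (by omega)
    rw [div_le_div_iff₀ hb1pos hNjpos, one_mul]
    exact_mod_cast h2
  have hjle : ∀ j ∈ t.image f2, j ≤ p := by
    intro j hj
    obtain ⟨b, hbt, hbj⟩ := Finset.mem_image.mp hj
    obtain ⟨hu2, hup, hv1, hNv, hmod⟩ := htfact b hbt
    have hvle : b.2 ≤ p := le_trans (Nat.le_mul_of_pos_left _ (by omega)) hNv
    have hmle : b.1 * b.2 ≤ p * p := Nat.mul_le_mul hup hvle
    have : b.1 * b.2 / p ≤ p * p / p := Nat.div_le_div_right hmle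
    rw [Nat.mul_div_cancel_left p (by omega)] at this
    rw [show f2 b = b.1 * b.2 / p from rfl] at hbj
    omega
  have hjcard : ∀ j ∈ t.image f2, ((t.filter (fun b => f2 b = j)).card : ℝ) ≤ D2 := by
    intro j hj
    have hjp : j ≤ p := hjle j hj
    set m₁ := p * j + 1 with hm₁
    set m₂ := p * j + (p - 1) with hm₂
    have hsub : t.filter (fun b => f2 b = j) ⊆
        (t.filter (fun b => b.1 * b.2 = m₁)) ∪ (t.filter (fun b => b.1 * b.2 = m₂)) := by
      intro b hb
      obtain ⟨hbt, hbj⟩ := Finset.mem_filter.mp hb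
      obtain ⟨hu2, hup, hv1, hNv, hmod⟩ := htfact b hbt
      have hdm : b.1 * b.2 = p * j + b.1 * b.2 % p := by
        conv_lhs => rw [← Nat.div_add_mod (b.1 * b.2) p]
        rw [show f2 b = b.1 * b.2 / p from rfl] at hbj
        rw [hbj]
      rw [Finset.mem_union, Finset.mem_filter, Finset.mem_filter]
      rcases hmod with h | h
      · left; exact ⟨hbt, by rw [hdm, h]⟩
      · right; exact ⟨hbt, by rw [hdm, h]⟩
    have cardinj : ∀ m : ℕ, m ≠ 0 →
        (t.filter (fun b => b.1 * b.2 = m)).card ≤ m.divisors.card := by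
      intro m hm
      refine Finset.card_le_card_of_injOn (fun b => b.1) ?_ ?_
      · intro b hb
        obtain ⟨hbt, hbm⟩ := Finset.mem_filter.mp hb
        exact Nat.mem_divisors.mpr ⟨⟨b.2, hbm.symm⟩, hm⟩
      · intro b hb b' hb' hbb
        obtain ⟨hbt, hbm⟩ := Finset.mem_filter.mp hb
        obtain ⟨hbt', hbm'⟩ := Finset.mem_filter.mp hb'
        obtain ⟨hu2, -, -, -, -⟩ := htfact b hbt
        have h3 : b.1 * b.2 = b.1 * b'.2 := by
          rw [hbm]; rw [show b.1 = b'.1 from hbb]; exact hbm'.symm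
        exact Prod.ext hbb (Nat.eq_of_mul_eq_mul_left (by omega) h3)
    have hc : (t.filter (fun b => f2 b = j)).card ≤ m₁.divisors.card + m₂.divisors.card :=
      (Finset.card_le_card hsub).trans ((Finset.card_union_le _ _).trans
        (add_le_add (cardinj m₁ (by omega)) (cardinj m₂ (by omega))))
    have hmle : ∀ m : ℕ, 1 ≤ m → (m:ℝ) ≤ 2 * (p:ℝ) * (p:ℝ) → (m.divisors.card : ℝ) ≤
        C₁ * (2 * (p:ℝ) * (p:ℝ)) ^ (ε/3) := by
      intro m h1 h2
      refine (hdiv m h1).trans ?_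
      exact mul_le_mul_of_nonneg_left
        (Real.rpow_le_rpow (by positivity) h2 (le_of_lt hδ)) (by linarith)
    have hb₁ : (m₁ : ℝ) ≤ 2 * (p:ℝ) * (p:ℝ) := by
      have : m₁ ≤ p * p + 1 := by
        have := Nat.mul_le_mul_left p hjp
        omega
      calc (m₁:ℝ) ≤ ((p * p + 1 : ℕ) : ℝ) := by exact_mod_cast this
        _ ≤ 2 * (p:ℝ) * (p:ℝ) := by push_cast; nlinarith [(show (2:ℝ) ≤ p by exact_mod_cast hp2)]
    have hb₂ : (m₂ : ℝ) ≤ 2 * (p:ℝ) * (p:ℝ) := by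
      have : m₂ ≤ p * p + p := by
        have := Nat.mul_le_mul_left p hjp
        omega
      calc (m₂:ℝ) ≤ ((p * p + p : ℕ) : ℝ) := by exact_mod_cast this
        _ ≤ 2 * (p:ℝ) * (p:ℝ) := by push_cast; nlinarith [ppos, (show (2:ℝ) ≤ p by exact_mod_cast hp2)]
    calc ((t.filter (fun b => f2 b = j)).card : ℝ)
        ≤ (m₁.divisors.card : ℝ) + (m₂.divisors.card : ℝ) := by exact_mod_cast hc
      _ ≤ C₁ * (2 * (p:ℝ) * (p:ℝ)) ^ (ε/3) + C₁ * (2 * (p:ℝ) * (p:ℝ)) ^ (ε/3) :=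
          add_le_add (hmle m₁ (by omega) hb₁) (hmle m₂ (by omega) hb₂)
      _ = D2 := by rw [hD2]; ring
  have hsum_range : ∑ j ∈ Finset.range (p+1), (2 / ((N * (j+1) : ℕ) : ℝ))
      ≤ (2/(N:ℝ)) * ((1 + 6/ε) * (p:ℝ)^(ε/3)) := by
    have hNpos : (0:ℝ) < N := by exact_mod_cast hN1
    have hterm : ∀ j ∈ Finset.range (p+1),
        (2 / ((N * (j+1) : ℕ) : ℝ)) = (2/(N:ℝ)) * (((j:ℝ)+1))⁻¹ := by
      intro j _
      push_cast
      rw [← div_div, div_eq_mul_inv ((2:ℝ)/N)]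
    have hharm : ∑ j ∈ Finset.range (p+1), (((j:ℝ)+1))⁻¹ = ((harmonic (p+1) : ℚ) : ℝ) := by
      rw [harmonic, Rat.cast_sum]
      push_cast
      rfl
    have hlog : ((harmonic (p+1) : ℚ) : ℝ) ≤ 1 + Real.log ((p+1 : ℕ) : ℝ) := by
      exact_mod_cast harmonic_le_one_add_log (p+1)
    have hp2r : (2:ℝ) ≤ (p:ℝ) := by exact_mod_cast hp2
    have hlog2 : Real.log (((p+1 : ℕ)) : ℝ) ≤ 2 * Real.log p := by
      have h1 : (((p+1:ℕ)):ℝ) ≤ ((p:ℝ))^2 := by push_cast; nlinarith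
      calc Real.log (((p+1:ℕ)):ℝ) ≤ Real.log ((p:ℝ)^2) :=
            Real.log_le_log (by positivity) h1
        _ = 2 * Real.log p := by rw [Real.log_pow]; push_cast; ring
    have hlog3 : Real.log p ≤ (p:ℝ)^(ε/3) / (ε/3) :=
      Real.log_le_rpow_div (by positivity) hδ
    have hone : (1:ℝ) ≤ (p:ℝ)^(ε/3) :=
      Real.one_le_rpow (by exact_mod_cast (show 1 ≤ p by omega)) (le_of_lt hδ)
    have hlog3' : Real.log p * (ε/3) ≤ (p:ℝ)^(ε/3) :=
      (le_div_iff₀ (by positivity)).mp hlog3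
    have hfrac : 2 * Real.log p ≤ (6/ε) * ((p:ℝ)^(ε/3)) := by
      rw [div_mul_eq_mul_div, le_div_iff₀ hε]
      linarith [hlog3']
    have hH : ((harmonic (p+1) : ℚ) : ℝ) ≤ (1+6/ε) * (p:ℝ)^(ε/3) := by
      have hexp : (1+6/ε) * (p:ℝ)^(ε/3) = (p:ℝ)^(ε/3) + (6/ε) * ((p:ℝ)^(ε/3)) := by ring
      rw [hexp]
      linarith
    calc ∑ j ∈ Finset.range (p+1), (2 / ((N * (j+1) : ℕ) : ℝ))
        = (2/(N:ℝ)) * ∑ j ∈ Finset.range (p+1), (((j:ℝ)+1))⁻¹ := by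
          rw [Finset.sum_congr rfl hterm, ← Finset.mul_sum]
      _ = (2/(N:ℝ)) * ((harmonic (p+1) : ℚ) : ℝ) := by rw [hharm]
      _ ≤ (2/(N:ℝ)) * ((1 + 6/ε) * (p:ℝ)^(ε/3)) :=
          mul_le_mul_of_nonneg_left hH (by positivity)
  have hsplit : (2*(p:ℝ)*(p:ℝ))^(ε/3) = (2:ℝ)^(ε/3) * ((p:ℝ)^(ε/3) * (p:ℝ)^(ε/3)) := by
    rw [Real.mul_rpow (by positivity) (by positivity),
      Real.mul_rpow (by positivity) (by positivity), mul_assoc]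
  have hppp : (p:ℝ)^(ε/3) * ((p:ℝ)^(ε/3) * (p:ℝ)^(ε/3)) = (p:ℝ)^ε := by
    rw [← Real.rpow_add ppos, ← Real.rpow_add ppos]
    ring_nf
  have hC8 : (0:ℝ) < 8*C₁*(2:ℝ)^(ε/3)*(1+6/ε) :=
    mul_pos (mul_pos (by linarith) h2pow) h6
  calc (∑ x ∈ s, (1:ℝ)/(dp p x : ℝ))
      ≤ ∑ b ∈ t, ((s.filter (fun a => φ a = b)).card : ℝ) * (1/(b.1:ℝ)) := step1
    _ ≤ 2 * ∑ b ∈ t, (1/(b.1:ℝ)) := step2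
    _ ≤ 2 * ∑ j ∈ t.image f2, ((t.filter (fun b => f2 b = j)).card : ℝ) *
          (2/((N*(j+1):ℕ):ℝ)) := mul_le_mul_of_nonneg_left step4 (by norm_num)
    _ ≤ 2 * ∑ j ∈ t.image f2, D2 * (2/((N*(j+1):ℕ):ℝ)) := by
        refine mul_le_mul_of_nonneg_left (Finset.sum_le_sum fun j hj => ?_) (by norm_num)
        exact mul_le_mul_of_nonneg_right (hjcard j hj) (by positivity)
    _ ≤ 2 * ∑ j ∈ Finset.range (p+1), D2 * (2/((N*(j+1):ℕ):ℝ)) := by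
        refine mul_le_mul_of_nonneg_left (Finset.sum_le_sum_of_subset_of_nonneg ?_ ?_)
          (by norm_num)
        · intro j hj
          exact Finset.mem_range.mpr (by have := hjle j hj; omega)
        · intro j _ _
          have : (0:ℝ) ≤ 2/((N*(j+1):ℕ):ℝ) := by positivity
          exact mul_nonneg (le_of_lt hD2pos) this
    _ = 2 * D2 * ∑ j ∈ Finset.range (p+1), (2/((N*(j+1):ℕ):ℝ)) := by
        rw [Finset.mul_sum, Finset.mul_sum]
        exact Finset.sum_congr rfl fun j _ => by ring
    _ ≤ 2 * D2 * ((2/(N:ℝ)) * ((1+6/ε) * (p:ℝ)^(ε/3))) :=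
        mul_le_mul_of_nonneg_left hsum_range (by positivity)
    _ = (8*C₁*(2:ℝ)^(ε/3)*(1+6/ε)) * (1/(N:ℝ)) * (p:ℝ)^ε := by
        rw [hD2, hsplit, ← hppp]
        have hNne : (N:ℝ) ≠ 0 := by
          have : (0:ℝ) < N := by exact_mod_cast hN1
          linarith
        field_simp
        ring
    _ ≤ (8*C₁*(2:ℝ)^(ε/3)*(1+6/ε)) * (1/(N:ℝ) + (M:ℝ)/(p:ℝ)) * (p:ℝ)^ε := by
        have h1 : (0:ℝ) ≤ (M:ℝ)/(p:ℝ) := by positivity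
        have hrp : (0:ℝ) ≤ (p:ℝ)^ε := by positivity
        have h2 : (1:ℝ)/(N:ℝ) ≤ 1/(N:ℝ) + (M:ℝ)/(p:ℝ) := by linarith
        have h3 : (8*C₁*(2:ℝ)^(ε/3)*(1+6/ε)) * (1/(N:ℝ)) ≤
            (8*C₁*(2:ℝ)^(ε/3)*(1+6/ε)) * (1/(N:ℝ) + (M:ℝ)/(p:ℝ)) :=
          mul_le_mul_of_nonneg_left h2 (le_of_lt hC8)
        exact mul_le_mul_of_nonneg_right h3 hrp
end

section
/- There is an absolute constant C > 0 such that the following holds. Let p be a prime, let I = [K+1, K+M] ⊆ [1, p-1] be an interval of M integers, let N be an integer with 1 ≤ N < p, let α_m (m ∈ I) be complex numbers, and let γ_x (1 ≤ x ≤ p-1) be complex numbers with |γ_x| ≤ min{N, p/‖x‖_p}. Then |∑_{m∈I} ∑_{x : 1 ≤ x ≤ p-1, ‖x‖_p ≤ p/N} α_m γ_x e_p(m x̄)| ≤ C ‖α‖₂ N^{1/2} p, where ‖α‖₂ = (∑_{m∈I} |α_m|²)^{1/2}. -/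
/-- `e_p(z) = exp(2πiz/p)`. -/
noncomputable def ep (p : ℕ) (z : ℤ) : ℂ := Complex.exp (2 * Real.pi * Complex.I * z / p)

lemma ep_add (p : ℕ) (a b : ℤ) : ep p (a + b) = ep p a * ep p b := by
  rw [ep, ep, ep, ← Complex.exp_add]
  congr 1
  push_cast
  ring

lemma ep_conj (p : ℕ) (z : ℤ) : (starRingEnd ℂ) (ep p z) = ep p (-z) := by
  rw [ep, ep, ← Complex.exp_conj]
  congr 1
  simp only [map_div₀, map_mul, Complex.conj_I, Complex.conj_ofReal, map_ofNat,
    map_intCast, map_natCast]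
  push_cast
  ring

lemma ep_nat_mul (p : ℕ) (m : ℕ) (u : ℤ) : ep p ((m : ℤ) * u) = (ep p u) ^ m := by
  rw [ep, ep, ← Complex.exp_nat_mul]
  congr 1
  push_cast
  ring

lemma ep_pow_p (p : ℕ) (hp : 0 < p) (u : ℤ) : (ep p u) ^ p = 1 := by
  rw [← ep_nat_mul, ep]
  have hpne : (p : ℂ) ≠ 0 := by exact_mod_cast hp.ne'
  have h : 2 * (Real.pi : ℂ) * Complex.I * (((p : ℕ) : ℤ) * u : ℤ) / p
      = (u : ℂ) * (2 * Real.pi * Complex.I) := by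
    push_cast
    field_simp
  rw [h, Complex.exp_int_mul_two_pi_mul_I]

lemma ep_eq_one_iff (p : ℕ) (hp : 0 < p) (u : ℤ) : ep p u = 1 ↔ (p : ℤ) ∣ u := by
  rw [ep, Complex.exp_eq_one_iff]
  have hpne : (p : ℂ) ≠ 0 := by exact_mod_cast hp.ne'
  have h2 : (2 * (Real.pi : ℂ) * Complex.I) ≠ 0 := by
    simp [Real.pi_ne_zero, Complex.I_ne_zero, Complex.ofReal_ne_zero]
  constructor
  · rintro ⟨n, hn⟩
    refine ⟨n, ?_⟩
    have h3 : (u : ℂ) * (2 * (Real.pi : ℂ) * Complex.I)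
        = ((p : ℤ) * n : ℤ) * (2 * (Real.pi : ℂ) * Complex.I) := by
      field_simp at hn
      push_cast
      rw [mul_comm ((u : ℂ))]
      rw [hn]; ring
    have := mul_right_cancel₀ h2 h3
    exact_mod_cast this
  · rintro ⟨n, hn⟩
    refine ⟨n, ?_⟩
    rw [hn]
    push_cast
    field_simp

lemma ep_orth (p : ℕ) (hp : 0 < p) (u : ℤ) :
    ∑ m ∈ Finset.range p, ep p ((m : ℤ) * u) = if (p : ℤ) ∣ u then (p : ℂ) else 0 := by
  have h : ∀ m ∈ Finset.range p, ep p ((m : ℤ) * u) = (ep p u) ^ m := fun m _ ↦ ep_nat_mul p m u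
  rw [Finset.sum_congr rfl h]
  by_cases hd : (p : ℤ) ∣ u
  · simp [hd, (ep_eq_one_iff p hp u).2 hd]
  · rw [if_neg hd]
    have hne : ep p u ≠ 1 := fun h1 ↦ hd ((ep_eq_one_iff p hp u).1 h1)
    rw [geom_sum_eq hne, ep_pow_p p hp]
    simp

lemma pinv_diag (p : ℕ) (hp : p.Prime) {x y : ℕ} (hx : x ∈ Finset.Icc 1 (p - 1))
    (hy : y ∈ Finset.Icc 1 (p - 1)) :
    ((p : ℤ) ∣ ((pinv p x : ℤ) - (pinv p y : ℤ))) ↔ x = y := by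
  haveI : Fact p.Prime := ⟨hp⟩
  simp only [Finset.mem_Icc] at hx hy
  constructor
  · intro hd
    have hvx : pinv p x < p := ZMod.val_lt _
    have hvy : pinv p y < p := ZMod.val_lt _
    have heq : pinv p x = pinv p y := by
      have h0 : ((pinv p x : ℤ) - (pinv p y : ℤ)) = 0 :=
        Int.eq_zero_of_abs_lt_dvd hd (by rw [abs_lt]; constructor <;> omega)
      omega
    have hinv : ((x : ZMod p)⁻¹) = ((y : ZMod p)⁻¹) := ZMod.val_injective p heq
    have hxy : (x : ZMod p) = (y : ZMod p) := inv_injective hinv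
    have h1 : (x : ZMod p).val = x := ZMod.val_cast_of_lt (by omega)
    have h2 : (y : ZMod p).val = y := ZMod.val_cast_of_lt (by omega)
    rw [← h1, ← h2, hxy]
  · rintro rfl; simp

lemma parseval (p : ℕ) (hp : p.Prime) (T : Finset ℕ) (hT : T ⊆ Finset.Icc 1 (p - 1))
    (γ : ℕ → ℂ) :
    ∑ m ∈ Finset.range p, ‖∑ x ∈ T, γ x * ep p ((m : ℤ) * pinv p x)‖ ^ 2
      = p * ∑ x ∈ T, ‖γ x‖ ^ 2 := by
  have hp0 : 0 < p := hp.pos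
  have key : ((∑ m ∈ Finset.range p, ‖∑ x ∈ T, γ x * ep p ((m : ℤ) * pinv p x)‖ ^ 2 : ℝ) : ℂ)
      = ((p * ∑ x ∈ T, ‖γ x‖ ^ 2 : ℝ) : ℂ) := by
    push_cast
    calc ∑ m ∈ Finset.range p, (‖∑ x ∈ T, γ x * ep p ((m : ℤ) * pinv p x)‖ : ℂ) ^ 2
        = ∑ m ∈ Finset.range p, (∑ x ∈ T, γ x * ep p ((m : ℤ) * pinv p x)) *
            (starRingEnd ℂ) (∑ y ∈ T, γ y * ep p ((m : ℤ) * pinv p y)) := by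
          refine Finset.sum_congr rfl fun m _ ↦ ?_
          rw [Complex.mul_conj']
      _ = ∑ x ∈ T, ∑ y ∈ T, (γ x * (starRingEnd ℂ) (γ y)) *
            ∑ m ∈ Finset.range p, ep p ((m : ℤ) * ((pinv p x : ℤ) - (pinv p y : ℤ))) := by
          simp_rw [map_sum, map_mul, ep_conj, Finset.sum_mul_sum, Finset.mul_sum]
          rw [Finset.sum_comm]
          refine Finset.sum_congr rfl fun x _ ↦ ?_
          rw [Finset.sum_comm]
          refine Finset.sum_congr rfl fun y _ ↦ ?_
          refine Finset.sum_congr rfl fun m _ ↦ ?_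
          rw [mul_sub, sub_eq_add_neg, ep_add]
          ring
      _ = ∑ x ∈ T, ∑ y ∈ T, (γ x * (starRingEnd ℂ) (γ y)) *
            (if ((p : ℤ) ∣ ((pinv p x : ℤ) - (pinv p y : ℤ))) then (p : ℂ) else 0) := by
          simp_rw [ep_orth p hp0]
      _ = ∑ x ∈ T, (γ x * (starRingEnd ℂ) (γ x)) * p := by
          refine Finset.sum_congr rfl fun x hx ↦ ?_
          rw [Finset.sum_eq_single_of_mem x hx]
          · rw [if_pos (by simp)]
          · intro y hy hne
            rw [if_neg, mul_zero]
            intro hd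
            exact hne ((pinv_diag p hp (hT hx) (hT hy)).1 hd).symm
      _ = (p : ℂ) * ∑ x ∈ T, (‖γ x‖ : ℂ) ^ 2 := by
          rw [Finset.mul_sum]
          refine Finset.sum_congr rfl fun x _ ↦ ?_
          rw [Complex.mul_conj']
          ring
  exact_mod_cast key

theorem weighted_sum_small_dist_bound :
    ∃ C : ℝ, 0 < C ∧
      ∀ p K M N : ℕ, p.Prime → 1 ≤ M → K + M ≤ p - 1 → 1 ≤ N → N < p →
        ∀ α γ : ℕ → ℂ,
        (∀ x ∈ Finset.Icc 1 (p - 1), ‖γ x‖ ≤ min (N : ℝ) ((p : ℝ) / (dp p x : ℝ))) →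
        ‖∑ m ∈ Finset.Icc (K + 1) (K + M),
            ∑ x ∈ (Finset.Icc 1 (p - 1)).filter (fun x : ℕ => (N * dp p x : ℝ) ≤ p),
              α m * γ x * ep p ((m : ℤ) * pinv p x)‖ ≤
          C * Real.sqrt (∑ m ∈ Finset.Icc (K + 1) (K + M), ‖α m‖ ^ 2) *
            Real.sqrt N * p := by
  refine ⟨2, by norm_num, ?_⟩
  intro p K M N hp hM hKM hN hNp α γ hγ
  have hp0 : 0 < p := hp.pos
  set T : Finset ℕ := (Finset.Icc 1 (p - 1)).filter (fun x : ℕ => (N * dp p x : ℝ) ≤ p) with hTdef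
  have hT : T ⊆ Finset.Icc 1 (p - 1) := Finset.filter_subset _ _
  set I : Finset ℕ := Finset.Icc (K + 1) (K + M) with hIdef
  set S : ℕ → ℂ := fun m ↦ ∑ x ∈ T, γ x * ep p ((m : ℤ) * pinv p x) with hSdef
  -- card bound
  set D : ℕ := p / N with hDdef
  have hdp : ∀ x ∈ Finset.Icc 1 (p - 1), dp p (x : ℤ) = min x (p - x) := by
    intro x hx
    simp only [Finset.mem_Icc] at hx
    have hxp : x < p := by omega
    rw [dp]
    have : ((x : ℤ) % p) = x := Int.emod_eq_of_lt (by positivity) (by exact_mod_cast hxp)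
    rw [this]
    simp
  have hTcard : T.card ≤ 2 * D := by
    have hsub : T ⊆ Finset.Icc 1 D ∪ Finset.Icc (p - D) (p - 1) := by
      intro x hx
      rw [hTdef, Finset.mem_filter] at hx
      obtain ⟨hx1, hx2⟩ := hx
      have hmin : min x (p - x) ≤ D := by
        rw [hDdef, Nat.le_div_iff_mul_le (by omega)]
        have : (N : ℝ) * (min x (p - x) : ℕ) ≤ p := by rw [← hdp x hx1]; exact hx2
        have h2 : N * min x (p - x) ≤ p := by exact_mod_cast this
        rwa [mul_comm]
      simp only [Finset.mem_Icc] at hx1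
      simp only [Finset.mem_union, Finset.mem_Icc]
      omega
    calc T.card ≤ (Finset.Icc 1 D ∪ Finset.Icc (p - D) (p - 1)).card := Finset.card_le_card hsub
      _ ≤ (Finset.Icc 1 D).card + (Finset.Icc (p - D) (p - 1)).card := Finset.card_union_le _ _
      _ ≤ 2 * D := by
          rw [Nat.card_Icc, Nat.card_Icc]
          have hDp : D ≤ p := Nat.div_le_self p N
          omega
  have hND : N * D ≤ p := by
    rw [hDdef, mul_comm]
    exact Nat.div_mul_le_self p N
  -- pointwise bound on γ on T
  have hγT : ∀ x ∈ T, ‖γ x‖ ^ 2 ≤ (N : ℝ) ^ 2 := by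
    intro x hx
    have h1 := hγ x (hT hx)
    have h2 : ‖γ x‖ ≤ N := h1.trans (min_le_left _ _)
    have h0 : (0 : ℝ) ≤ ‖γ x‖ := norm_nonneg _
    nlinarith
  -- sum of ‖S m‖² over I bounded
  have hSsum : ∑ m ∈ I, ‖S m‖ ^ 2 ≤ 2 * N * p ^ 2 := by
    have hIsub : I ⊆ Finset.range p := by
      intro m hm
      rw [hIdef, Finset.mem_Icc] at hm
      rw [Finset.mem_range]
      omega
    have h1 : ∑ m ∈ I, ‖S m‖ ^ 2 ≤ ∑ m ∈ Finset.range p, ‖S m‖ ^ 2 :=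
      Finset.sum_le_sum_of_subset_of_nonneg hIsub (fun _ _ _ ↦ by positivity)
    rw [hSdef] at h1 ⊢
    calc ∑ m ∈ I, ‖∑ x ∈ T, γ x * ep p ((m : ℤ) * pinv p x)‖ ^ 2
        ≤ ∑ m ∈ Finset.range p, ‖∑ x ∈ T, γ x * ep p ((m : ℤ) * pinv p x)‖ ^ 2 := h1
      _ = p * ∑ x ∈ T, ‖γ x‖ ^ 2 := parseval p hp T hT γ
      _ ≤ p * (T.card * (N : ℝ) ^ 2) := by
          have := Finset.sum_le_card_nsmul T _ _ hγT
          simp only [nsmul_eq_mul] at this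
          have hpnn : (0 : ℝ) ≤ p := by positivity
          exact mul_le_mul_of_nonneg_left this hpnn
      _ ≤ 2 * N * p ^ 2 := by
          have hc : (T.card : ℝ) ≤ 2 * D := by exact_mod_cast hTcard
          have hnd : (N : ℝ) * D ≤ p := by exact_mod_cast hND
          have hN0 : (0 : ℝ) ≤ N := by positivity
          have hp0' : (0 : ℝ) ≤ p := by positivity
          have hD0 : (0 : ℝ) ≤ D := by positivity
          calc (p : ℝ) * (T.card * (N : ℝ) ^ 2)
              ≤ (p : ℝ) * (2 * D * (N : ℝ) ^ 2) := by
                have : (T.card : ℝ) * (N : ℝ) ^ 2 ≤ 2 * D * (N : ℝ) ^ 2 := by nlinarith [sq_nonneg ((N:ℝ))]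
                exact mul_le_mul_of_nonneg_left this hp0'
            _ = 2 * N * ((N : ℝ) * D * p) := by ring
            _ ≤ 2 * N * ((p : ℝ) * p) := by
                have : (N : ℝ) * D * p ≤ (p : ℝ) * p := mul_le_mul_of_nonneg_right hnd hp0'
                nlinarith
            _ = 2 * N * p ^ 2 := by ring
  -- main chain
  calc ‖∑ m ∈ I, ∑ x ∈ T, α m * γ x * ep p ((m : ℤ) * pinv p x)‖
      = ‖∑ m ∈ I, α m * S m‖ := by
        congr 1
        refine Finset.sum_congr rfl fun m _ ↦ ?_
        rw [hSdef, Finset.mul_sum]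
        exact Finset.sum_congr rfl fun x _ ↦ by ring
    _ ≤ ∑ m ∈ I, ‖α m * S m‖ := norm_sum_le _ _
    _ = ∑ m ∈ I, ‖α m‖ * ‖S m‖ := by simp [norm_mul]
    _ ≤ Real.sqrt (∑ m ∈ I, ‖α m‖ ^ 2) * Real.sqrt (∑ m ∈ I, ‖S m‖ ^ 2) :=
        Real.sum_mul_le_sqrt_mul_sqrt _ _ _
    _ ≤ Real.sqrt (∑ m ∈ I, ‖α m‖ ^ 2) * Real.sqrt (2 * N * p ^ 2) := by
        exact mul_le_mul_of_nonneg_left (Real.sqrt_le_sqrt hSsum) (Real.sqrt_nonneg _)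
    _ ≤ Real.sqrt (∑ m ∈ I, ‖α m‖ ^ 2) * (2 * Real.sqrt N * p) := by
        refine mul_le_mul_of_nonneg_left ?_ (Real.sqrt_nonneg _)
        have h4 : (2 * N * p ^ 2 : ℝ) ≤ (2 * Real.sqrt N * p) ^ 2 := by
          have hNs : Real.sqrt N ^ 2 = N := Real.sq_sqrt (by positivity)
          nlinarith [Real.sqrt_nonneg (N : ℝ), sq_nonneg ((p : ℝ))]
        calc Real.sqrt (2 * N * p ^ 2 : ℝ) ≤ Real.sqrt ((2 * Real.sqrt N * p) ^ 2) :=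
              Real.sqrt_le_sqrt h4
          _ = 2 * Real.sqrt N * p := Real.sqrt_sq (by positivity)
    _ = 2 * Real.sqrt (∑ m ∈ I, ‖α m‖ ^ 2) * Real.sqrt N * p := by ring
end
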